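/- Let V be a real Hilbert space, Υ a finite index set with closed subspaces O_ξ ⊆ V, and suppose Υ = Υ₁ ∪̇ ... ∪̇ Υ_J is a partition such that within each block Υ_j, any two distinct subspaces O_{ξ₁}, O_{ξ₂} are orthogonal. Then for every continuous linear functional f on V, (Σ_{ξ∈Υ} ‖f‖²_{O_ξ'})^{1/2} ≤ √J · ‖f‖_{V'}. -/

import Mathlib

open Finset

set_option maxHeartbeats 800000
set_option synthInstance.maxHeartbeats 200000

/-- Orthogonal-grouping efficiency estimate: if the index set is partitioned into `J`
blocks such that subspaces within each block are pairwise orthogonal, then the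
ℓ²-sum of the local dual norms is bounded by `√J` times the global dual norm. -/
theorem stmt_2 {V : Type*} [NormedAddCommGroup V] [InnerProductSpace ℝ V] [CompleteSpace V]
    {ι : Type*} [Fintype ι]
    (O : ι → Submodule ℝ V) (hclosed : ∀ ξ, IsClosed ((O ξ) : Set V))
    (J : ℕ) (g : ι → Fin J)
    (horth : ∀ ξ₁ ξ₂, g ξ₁ = g ξ₂ → ξ₁ ≠ ξ₂ →
      ∀ x ∈ O ξ₁, ∀ y ∈ O ξ₂, (inner ℝ x y : ℝ) = 0)
    (f : V →L[ℝ] ℝ) :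
    Real.sqrt (∑ ξ, ‖f.comp (O ξ).subtypeL‖ ^ 2) ≤ Real.sqrt J * ‖f‖ := by
  classical
  haveI : ∀ ξ, CompleteSpace (O ξ) := fun ξ => (hclosed ξ).completeSpace_coe
  set v : V := (InnerProductSpace.toDual ℝ V).symm f with hv
  have hnv : ‖v‖ = ‖f‖ := (InnerProductSpace.toDual ℝ V).symm.norm_map f
  have hfx : ∀ x : V, f x = inner ℝ v x := fun x =>
    (InnerProductSpace.toDual_symm_apply (y := f) (x := x)).symm
  set P : ι → V := fun ξ => ((O ξ).orthogonalProjectionOnto v : V) with hP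
  have hPmem : ∀ ξ, P ξ ∈ O ξ := fun ξ => ((O ξ).orthogonalProjectionOnto v).2
  have hinner : ∀ ξ, ∀ x ∈ O ξ, (inner ℝ v x : ℝ) = inner ℝ (P ξ) x := by
    intro ξ x hx
    have h0 : (inner ℝ (v - P ξ) x : ℝ) = 0 :=
      (O ξ).starProjection_inner_eq_zero v x hx
    rw [inner_sub_left] at h0
    linarith
  -- Step 1: local dual norm bound
  have h1 : ∀ ξ, ‖f.comp (O ξ).subtypeL‖ ≤ ‖P ξ‖ := by
    intro ξ
    refine ContinuousLinearMap.opNorm_le_bound _ (norm_nonneg _) ?_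
    intro x
    have : f x = inner ℝ (P ξ) (x : V) := by rw [hfx]; exact hinner ξ x x.2
    calc ‖(f.comp (O ξ).subtypeL) x‖ = ‖(inner ℝ (P ξ) (x : V) : ℝ)‖ := by
          simp only [ContinuousLinearMap.comp_apply, Submodule.subtypeL_apply]
          rw [this]
      _ ≤ ‖P ξ‖ * ‖(x : V)‖ := norm_inner_le_norm _ _
      _ = ‖P ξ‖ * ‖x‖ := rfl
  -- Step 2: Bessel-type estimate on each block
  have h2 : ∀ j : Fin J, ∑ ξ ∈ univ.filter (fun ξ => g ξ = j), ‖P ξ‖ ^ 2 ≤ ‖v‖ ^ 2 := by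
    intro j
    set s := univ.filter (fun ξ => g ξ = j) with hs
    set w : V := ∑ ξ ∈ s, P ξ with hw
    have horthP : ∀ ξ₁ ∈ s, ∀ ξ₂ ∈ s, ξ₁ ≠ ξ₂ → (inner ℝ (P ξ₁) (P ξ₂) : ℝ) = 0 := by
      intro ξ₁ h₁ ξ₂ h₂ hne
      simp only [hs, mem_filter] at h₁ h₂
      exact horth ξ₁ ξ₂ (h₁.2.trans h₂.2.symm) hne _ (hPmem ξ₁) _ (hPmem ξ₂)
    have hw2 : ‖w‖ ^ 2 = ∑ ξ ∈ s, ‖P ξ‖ ^ 2 := by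
      rw [← real_inner_self_eq_norm_sq, hw, sum_inner]
      refine Finset.sum_congr rfl ?_
      intro ξ hξ
      rw [inner_sum, Finset.sum_eq_single ξ]
      · exact real_inner_self_eq_norm_sq _
      · intro ξ₂ h₂ hne; exact horthP ξ hξ ξ₂ h₂ (Ne.symm hne)
      · intro h; exact absurd hξ h
    have hvw : (inner ℝ v w : ℝ) = ∑ ξ ∈ s, ‖P ξ‖ ^ 2 := by
      rw [hw, inner_sum]
      refine Finset.sum_congr rfl ?_
      intro ξ _
      rw [hinner ξ (P ξ) (hPmem ξ), real_inner_self_eq_norm_sq]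
    have hcs : (inner ℝ v w : ℝ) ≤ ‖v‖ * ‖w‖ := real_inner_le_norm v w
    nlinarith [sq_nonneg (‖v‖ - ‖w‖), norm_nonneg w, norm_nonneg v,
      Finset.sum_nonneg (fun ξ (_ : ξ ∈ s) => sq_nonneg ‖P ξ‖)]
  -- Step 3: combine
  have hsum : ∑ ξ, ‖f.comp (O ξ).subtypeL‖ ^ 2 ≤ (J : ℝ) * ‖f‖ ^ 2 := by
    have hfib : ∑ ξ, ‖f.comp (O ξ).subtypeL‖ ^ 2 =
        ∑ j : Fin J, ∑ ξ ∈ univ.filter (fun ξ => g ξ = j), ‖f.comp (O ξ).subtypeL‖ ^ 2 := by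
      rw [Finset.sum_fiberwise_of_maps_to (fun ξ _ => Finset.mem_univ (g ξ))]
    rw [hfib]
    calc ∑ j : Fin J, ∑ ξ ∈ univ.filter (fun ξ => g ξ = j), ‖f.comp (O ξ).subtypeL‖ ^ 2
        ≤ ∑ j : Fin J, ∑ ξ ∈ univ.filter (fun ξ => g ξ = j), ‖P ξ‖ ^ 2 := by
          refine Finset.sum_le_sum fun j _ => Finset.sum_le_sum fun ξ _ => ?_
          have h := h1 ξ
          have h0 : (0:ℝ) ≤ ‖f.comp (O ξ).subtypeL‖ := ContinuousLinearMap.opNorm_nonneg _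
          nlinarith [norm_nonneg (P ξ)]
      _ ≤ ∑ _j : Fin J, ‖v‖ ^ 2 := Finset.sum_le_sum fun j _ => h2 j
      _ = (J : ℝ) * ‖f‖ ^ 2 := by rw [Finset.sum_const, card_univ, Fintype.card_fin,
            nsmul_eq_mul, hnv]
  calc Real.sqrt (∑ ξ, ‖f.comp (O ξ).subtypeL‖ ^ 2)
      ≤ Real.sqrt ((J : ℝ) * ‖f‖ ^ 2) := Real.sqrt_le_sqrt hsum
    _ = Real.sqrt J * ‖f‖ := by
        rw [Real.sqrt_mul (Nat.cast_nonneg J), Real.sqrt_sq (norm_nonneg f)]
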